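/- Under the heat-matrix assumptions with zero sources, for every index i there exist nonnegative weights w_1, …, w_N with Σ_j w_j = 1 such that LN_2(h)_i = Σ_j w_j u⁰_j; i.e., each component of the two-stage linear-neighbour update is a convex combination of the initial values (Appendix B, point C). -/

import Mathlib

open Finset NormedSpace Asymptotics

/-- `aCoef M Q v i = Σ_{j≠i} M_ij v_j + Q_i`. -/
noncomputable def aCoef {N : ℕ} (M : Matrix (Fin N) (Fin N) ℝ) (Q : Fin N → ℝ)
    (v : Fin N → ℝ) (i : Fin N) : ℝ :=
  (∑ j ∈ Finset.univ.erase i, M i j * v j) + Q i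

/-- The constant-neighbour step `F_h`. -/
noncomputable def cnStep {N : ℕ} (M : Matrix (Fin N) (Fin N) ℝ) (Q u0 : Fin N → ℝ)
    (h : ℝ) (v : Fin N → ℝ) : Fin N → ℝ :=
  fun i => u0 i * Real.exp (M i i * h)
    + (aCoef M Q v i / (-(M i i))) * (1 - Real.exp (M i i * h))

/-- The `k`-stage constant-neighbour approximation `CN_k(h) = F_h^[k] u⁰`. -/
noncomputable def CN {N : ℕ} (M : Matrix (Fin N) (Fin N) ℝ) (Q u0 : Fin N → ℝ)
    (k : ℕ) (h : ℝ) : Fin N → ℝ :=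
  (cnStep M Q u0 h)^[k] u0

/-- The effective slope `s_i(v) = (a_i(v) − a_i(u⁰))/h`. -/
noncomputable def sCoef {N : ℕ} (M : Matrix (Fin N) (Fin N) ℝ) (Q u0 : Fin N → ℝ)
    (h : ℝ) (v : Fin N → ℝ) (i : Fin N) : ℝ :=
  (aCoef M Q v i - aCoef M Q u0 i) / h

/-- The linear-neighbour step `G_h`, with `τ_i = −1/M_ii`. -/
noncomputable def lnStep {N : ℕ} (M : Matrix (Fin N) (Fin N) ℝ) (Q u0 : Fin N → ℝ)
    (h : ℝ) (v : Fin N → ℝ) : Fin N → ℝ :=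
  fun i =>
    u0 i * Real.exp (M i i * h)
      + (aCoef M Q u0 i * (-(M i i)⁻¹) - sCoef M Q u0 h v i * (-(M i i)⁻¹) ^ 2)
          * (1 - Real.exp (M i i * h))
      + sCoef M Q u0 h v i * (-(M i i)⁻¹) * h

/-- The `k`-stage linear-neighbour approximation `LN_k(h) = G_h^[k−1] (CN_1(h))`, `k ≥ 2`. -/
noncomputable def LN {N : ℕ} (M : Matrix (Fin N) (Fin N) ℝ) (Q u0 : Fin N → ℝ)
    (k : ℕ) (h : ℝ) : Fin N → ℝ :=
  (lnStep M Q u0 h)^[k - 1] (cnStep M Q u0 h u0)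

/-- The exact solution `u_ex(h) = e^{hM} u⁰ + ∫₀^h e^{(h−s)M} Q ds`. -/
noncomputable def uex {N : ℕ} (M : Matrix (Fin N) (Fin N) ℝ) (Q u0 : Fin N → ℝ)
    (h : ℝ) : Fin N → ℝ :=
  (exp (h • M)).mulVec u0 + ∫ s in (0:ℝ)..h, (exp ((h - s) • M)).mulVec Q

/-- Appendix B, point C: under the heat-matrix assumptions with zero sources, each
component of the two-stage linear-neighbour update `LN_2(h)` is a convex combination
of the initial values. -/
theorem ln2_convex_combination {N : ℕ} (hN : 1 ≤ N) (M : Matrix (Fin N) (Fin N) ℝ)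
    (hoff : ∀ i j, j ≠ i → 0 ≤ M i j)
    (hrow : ∀ i, ∑ j, M i j = 0)
    (hdiag : ∀ i, M i i < 0)
    (u0 : Fin N → ℝ) (h : ℝ) (hh : 0 < h) (i : Fin N) :
    ∃ w : Fin N → ℝ, (∀ j, 0 ≤ w j) ∧ (∑ j, w j) = 1 ∧
      LN M (0 : Fin N → ℝ) u0 2 h i = ∑ j, w j * u0 j := by
  classical
  have hne : ∀ k : Fin N, (-(M k k)) ≠ 0 := fun k => ne_of_gt (by linarith [hdiag k])
  have hrow' : ∀ k : Fin N, ∑ j ∈ Finset.univ.erase k, M k j = -(M k k) := by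
    intro k
    have h2 : ∑ j ∈ Finset.univ.erase k, M k j + M k k = ∑ j, M k j :=
      Finset.sum_erase_add _ _ (Finset.mem_univ k)
    have h1 := hrow k
    linarith
  have hElt : ∀ k : Fin N, Real.exp (M k k * h) ≤ 1 := by
    intro k
    have : M k k * h < 0 := mul_neg_of_neg_of_pos (hdiag k) hh
    have := Real.exp_lt_one_iff.mpr this
    linarith
  set P : Fin N → Fin N → ℝ := fun k j =>
    if j = k then Real.exp (M k k * h)
    else (M k j / (-(M k k))) * (1 - Real.exp (M k k * h)) with hPdef
  have hPnn : ∀ k j, 0 ≤ P k j := by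
    intro k j
    by_cases hj : j = k
    · simp only [hPdef, if_pos hj]
      exact (Real.exp_pos _).le
    · simp only [hPdef, if_neg hj]
      have h0 := hoff k j hj
      have h1 : 0 < -(M k k) := by linarith [hdiag k]
      have h2 := hElt k
      have : 0 ≤ M k j / (-(M k k)) := div_nonneg h0 h1.le
      nlinarith
  have hPerase : ∀ k, ∑ j ∈ Finset.univ.erase k, P k j = 1 - Real.exp (M k k * h) := by
    intro k
    have h1 : ∑ j ∈ Finset.univ.erase k, P k j
        = (∑ j ∈ Finset.univ.erase k, M k j) / (-(M k k)) * (1 - Real.exp (M k k * h)) := by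
      rw [Finset.sum_div, Finset.sum_mul]
      refine Finset.sum_congr rfl ?_
      intro j hj
      have hj' : j ≠ k := Finset.ne_of_mem_erase hj
      simp [hPdef, hj']
    rw [h1, hrow' k, div_self (hne k), one_mul]
  have hPsum : ∀ k, ∑ j, P k j = 1 := by
    intro k
    rw [← Finset.sum_erase_add _ _ (Finset.mem_univ k), hPerase k]
    have : P k k = Real.exp (M k k * h) := by simp [hPdef]
    rw [this]; ring
  have hCN : ∀ k, cnStep M (0 : Fin N → ℝ) u0 h u0 k = ∑ j, P k j * u0 j := by
    intro k
    rw [← Finset.sum_erase_add _ _ (Finset.mem_univ k)]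
    have h1 : ∑ j ∈ Finset.univ.erase k, P k j * u0 j
        = (∑ j ∈ Finset.univ.erase k, M k j * u0 j) / (-(M k k)) * (1 - Real.exp (M k k * h)) := by
      rw [Finset.sum_div, Finset.sum_mul]
      refine Finset.sum_congr rfl ?_
      intro j hj
      have hj' : j ≠ k := Finset.ne_of_mem_erase hj
      simp only [hPdef, if_neg hj']
      ring
    rw [h1]
    have h2 : P k k = Real.exp (M k k * h) := by simp [hPdef]
    rw [h2]
    simp only [cnStep, aCoef, Pi.zero_apply, add_zero]
    ring
  -- main abbreviations for index i
  set m : ℝ := M i i with hmdef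
  set E : ℝ := Real.exp (m * h) with hEdef
  set τ : ℝ := (-m)⁻¹ with hτdef
  have hmneg : m < 0 := hdiag i
  have hmpos : (0:ℝ) < -m := by linarith
  have hτpos : 0 < τ := inv_pos.mpr hmpos
  have hτm : τ * (-m) = 1 := inv_mul_cancel₀ (hne i)
  have hE1 : E ≤ 1 := hElt i
  have hE0 : 0 < E := Real.exp_pos _
  set β : ℝ := τ * (h - τ * (1 - E)) / h with hβdef
  set α : ℝ := τ * (1 - E) - β with hαdef
  have hexp1 : m * h + 1 ≤ E := Real.add_one_le_exp (m * h)
  have hβ0 : 0 ≤ β := by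
    have h1 : τ * (1 - E) ≤ h := by nlinarith
    have : 0 ≤ τ * (h - τ * (1 - E)) := by nlinarith
    exact div_nonneg this hh.le
  have hα0 : 0 ≤ α := by
    have hexp2 : -(m * h) + 1 ≤ Real.exp (-(m * h)) := Real.add_one_le_exp _
    have hEinv : E * Real.exp (-(m * h)) = 1 := by
      rw [hEdef, ← Real.exp_add]; simp
    -- E * (1 - m*h) ≤ 1
    have h3 : E * (1 - m * h) ≤ 1 := by nlinarith
    -- τ*(1-E) ≥ E*h
    have h4 : E * h ≤ τ * (1 - E) := by nlinarith
    have : α = τ * (τ * (1 - E) - E * h) / h := by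
      rw [hαdef, hβdef]; field_simp; ring
    rw [this]
    have : 0 ≤ τ * (τ * (1 - E) - E * h) := by nlinarith
    exact div_nonneg this hh.le
  -- the weights
  set w : Fin N → ℝ := fun j =>
    (if j = i then E else 0) + α * (if j = i then 0 else M i j)
      + β * ∑ k ∈ Finset.univ.erase i, M i k * P k j with hwdef
  refine ⟨w, ?_, ?_, ?_⟩
  · intro j
    have h1 : 0 ≤ (if j = i then E else 0) := by positivity
    have h2 : 0 ≤ (if j = i then 0 else M i j) := by
      by_cases hj : j = i
      · simp [hj]
      · simpa [hj] using hoff i j hj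
    have h3 : 0 ≤ ∑ k ∈ Finset.univ.erase i, M i k * P k j := by
      refine Finset.sum_nonneg ?_
      intro k hk
      exact mul_nonneg (hoff i k (Finset.ne_of_mem_erase hk)) (hPnn k j)
    have := mul_nonneg hα0 h2
    have := mul_nonneg hβ0 h3
    simp only [hwdef]
    linarith
  · -- sum of weights is 1
    simp only [hwdef]
    rw [Finset.sum_add_distrib, Finset.sum_add_distrib]
    have hA : ∑ j, (if j = i then E else 0) = E := by simp
    have hB : ∑ j : Fin N, α * (if j = i then 0 else M i j) = α * (-m) := by
      rw [← Finset.mul_sum]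
      congr 1
      rw [← Finset.sum_erase_add _ _ (Finset.mem_univ i)]
      rw [if_pos rfl, add_zero, ← hrow' i]
      refine Finset.sum_congr rfl ?_
      intro j hj
      simp [Finset.ne_of_mem_erase hj]
    have hC : ∑ j : Fin N, β * ∑ k ∈ Finset.univ.erase i, M i k * P k j = β * (-m) := by
      rw [← Finset.mul_sum]
      congr 1
      rw [Finset.sum_comm]
      rw [← hrow' i]
      refine Finset.sum_congr rfl ?_
      intro k _
      rw [← Finset.mul_sum, hPsum k, mul_one]
    rw [hA, hB, hC]
    nlinarith [hτm]
  · -- the value identity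
    have hLN : LN M (0 : Fin N → ℝ) u0 2 h i
        = lnStep M (0 : Fin N → ℝ) u0 h (cnStep M (0 : Fin N → ℝ) u0 h u0) i := by
      simp [LN]
    rw [hLN]
    set a : ℝ := aCoef M (0 : Fin N → ℝ) u0 i with hadef
    set a' : ℝ := aCoef M (0 : Fin N → ℝ) (cnStep M (0 : Fin N → ℝ) u0 h u0) i with ha'def
    have hRHS : ∑ j, w j * u0 j = E * u0 i + α * a + β * a' := by
      simp only [hwdef]
      have expand : ∀ j, ((if j = i then E else 0) + α * (if j = i then 0 else M i j)
          + β * ∑ k ∈ Finset.univ.erase i, M i k * P k j) * u0 j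
          = (if j = i then E * u0 j else 0) + α * (if j = i then 0 else M i j * u0 j)
          + β * ∑ k ∈ Finset.univ.erase i, M i k * (P k j * u0 j) := by
        intro j
        have hs : (∑ k ∈ Finset.univ.erase i, M i k * P k j) * u0 j
            = ∑ k ∈ Finset.univ.erase i, M i k * (P k j * u0 j) := by
          rw [Finset.sum_mul]
          exact Finset.sum_congr rfl fun k _ => by ring
        by_cases hj : j = i
        · simp only [if_pos hj]
          rw [← hs]; ring
        · simp only [if_neg hj]
          rw [← hs]; ring
      rw [Finset.sum_congr rfl (fun j _ => expand j)]
      rw [Finset.sum_add_distrib, Finset.sum_add_distrib]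
      have hA : ∑ j, (if j = i then E * u0 j else 0) = E * u0 i := by simp
      have hB : ∑ j : Fin N, α * (if j = i then 0 else M i j * u0 j) = α * a := by
        rw [← Finset.mul_sum]
        congr 1
        rw [← Finset.sum_erase_add _ _ (Finset.mem_univ i), if_pos rfl, add_zero]
        rw [hadef]
        simp only [aCoef, Pi.zero_apply, add_zero]
        refine Finset.sum_congr rfl ?_
        intro j hj
        simp [Finset.ne_of_mem_erase hj]
      have hC : ∑ j : Fin N, β * ∑ k ∈ Finset.univ.erase i, M i k * (P k j * u0 j)
          = β * a' := by
        rw [← Finset.mul_sum]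
        congr 1
        rw [Finset.sum_comm]
        rw [ha'def]
        simp only [aCoef, Pi.zero_apply, add_zero]
        refine Finset.sum_congr rfl ?_
        intro k _
        rw [← Finset.mul_sum, hCN k]
      rw [hA, hB, hC]
    rw [hRHS]
    simp only [lnStep, sCoef, ← hadef, ← ha'def, ← hmdef, ← hEdef]
    have hτeq : -(m)⁻¹ = τ := by rw [hτdef, inv_neg]
    rw [hτeq]
    rw [hαdef, hβdef]
    field_simp
    ring
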